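/- arXiv:1411.7213 — 2 statements merged into one kernel-verified Lean document; each statement's English description precedes it below -/
import Mathlib

section
/- For fixed a ∈ ℝ and m_r > 0, the function p ↦ [a²/(|p|²+m_r²)² + 1/(a²+|p|²+m_r²) − 1/(|p|²+m_r²)] is Lebesgue integrable on ℝ⁴, even though each of the three summands separately is not integrable on ℝ⁴. -/
open MeasureTheory Metric
open scoped ENNReal NNReal

local notation "E4" => EuclideanSpace ℝ (Fin 4)

lemma annulus_vol (n : ℕ) :
    ENNReal.ofReal (((n : ℝ) + 1) ^ 3) * volume (ball (0 : E4) 1) ≤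
      volume (ball (0 : E4) ((n : ℝ) + 2) \ ball (0 : E4) ((n : ℝ) + 1)) := by
  have hsub : ball (0 : E4) ((n : ℝ) + 1) ⊆ ball (0 : E4) ((n : ℝ) + 2) :=
    ball_subset_ball (by linarith)
  have hfin : volume (ball (0 : E4) ((n : ℝ) + 1)) ≠ ⊤ := measure_ball_lt_top.ne
  rw [measure_diff hsub measurableSet_ball.nullMeasurableSet hfin]
  have h1 : volume (ball (0 : E4) ((n : ℝ) + 2)) =
      ENNReal.ofReal (((n : ℝ) + 2) ^ (Module.finrank ℝ E4)) * volume (ball (0 : E4) 1) :=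
    Measure.addHaar_ball volume 0 (by positivity)
  have h2 : volume (ball (0 : E4) ((n : ℝ) + 1)) =
      ENNReal.ofReal (((n : ℝ) + 1) ^ (Module.finrank ℝ E4)) * volume (ball (0 : E4) 1) :=
    Measure.addHaar_ball volume 0 (by positivity)
  rw [h1, h2, finrank_euclideanSpace_fin]
  rw [← ENNReal.sub_mul (fun _ _ => measure_ball_lt_top.ne)]
  gcongr
  rw [← ENNReal.ofReal_sub _ (by positivity)]
  apply ENNReal.ofReal_le_ofReal
  have hx : (0:ℝ) ≤ (n:ℝ) := Nat.cast_nonneg n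
  nlinarith [pow_nonneg hx 3, pow_nonneg hx 2, sq_nonneg ((n:ℝ))]

lemma not_integrable_aux (b c : ℝ) (hb : 0 < b) (hc : 0 < c) (k : ℕ) (hk2 : k ≤ 2) :
    ¬ Integrable (fun p : E4 => b / (‖p‖ ^ 2 + c) ^ k) := by
  intro h
  set f : E4 → ℝ := fun p => b / (‖p‖ ^ 2 + c) ^ k with hf
  set A : ℕ → Set E4 := fun n => ball (0 : E4) ((n : ℝ) + 2) \ ball (0 : E4) ((n : ℝ) + 1)
    with hA
  have hAmeas : ∀ n, MeasurableSet (A n) := fun n =>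
    measurableSet_ball.diff measurableSet_ball
  have hAdisj : Pairwise (Function.onFun Disjoint A) := by
    intro m n hmn
    simp only [Function.onFun, Set.disjoint_left]
    rintro p ⟨hp1, hp2⟩ ⟨hq1, hq2⟩
    simp only [hA, mem_ball, dist_zero_right, not_lt, Set.mem_diff] at hp1 hp2 hq1 hq2
    have h1 : m < n + 1 := by exact_mod_cast (show (m:ℝ) < (n:ℝ) + 1 by linarith)
    have h2 : n < m + 1 := by exact_mod_cast (show (n:ℝ) < (m:ℝ) + 1 by linarith)
    omega
  set ε : ℝ := b / (16 * (1 + c) ^ 2) with hε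
  have hεpos : 0 < ε := by positivity
  set v : ℝ≥0∞ := volume (ball (0 : E4) 1) with hv
  have hv0 : v ≠ 0 := (measure_ball_pos volume 0 one_pos).ne'
  have key : ∀ n : ℕ, ENNReal.ofReal (ε / ((n : ℝ) + 1)) * v ≤
      ∫⁻ p in A n, ‖f p‖₊ ∂volume := by
    intro n
    have hlow : ∀ p ∈ A n,
        ENNReal.ofReal (ε / ((n : ℝ) + 1) ^ 4) ≤ (‖f p‖₊ : ℝ≥0∞) := by
      intro p hp
      have hpn : ‖p‖ < (n : ℝ) + 2 := by
        have := hp.1; simpa [mem_ball, dist_zero_right] using this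
      have hp0 : (0 : ℝ) ≤ ‖p‖ := norm_nonneg p
      have hs : 0 < ‖p‖ ^ 2 + c := by positivity
      have hbig : (‖p‖ ^ 2 + c) ^ k ≤ 16 * (1 + c) ^ 2 * ((n : ℝ) + 1) ^ 4 := by
        have hn0 : (0:ℝ) ≤ (n:ℝ) := Nat.cast_nonneg n
        have hsq : ‖p‖ ^ 2 ≤ ((n : ℝ) + 2) ^ 2 := by nlinarith
        have hc1 : (0:ℝ) ≤ ((n:ℝ)+2)^2 - 1 := by nlinarith
        have hcle : c ≤ c * ((n : ℝ) + 2) ^ 2 := by nlinarith [mul_nonneg hc.le hc1]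
        have h1 : ‖p‖ ^ 2 + c ≤ (1 + c) * ((n : ℝ) + 2) ^ 2 := by nlinarith
        have h2 : (1 : ℝ) ≤ (1 + c) * ((n : ℝ) + 2) ^ 2 := by nlinarith
        have h16 : ((n : ℝ) + 2) ^ 4 ≤ 16 * ((n : ℝ) + 1) ^ 4 := by
          nlinarith [Nat.cast_nonneg (α := ℝ) n, sq_nonneg ((n:ℝ)), pow_nonneg
            (Nat.cast_nonneg (α := ℝ) n) 3]
        calc (‖p‖ ^ 2 + c) ^ k ≤ ((1 + c) * ((n : ℝ) + 2) ^ 2) ^ k :=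
              pow_le_pow_left₀ hs.le h1 k
          _ ≤ ((1 + c) * ((n : ℝ) + 2) ^ 2) ^ 2 := pow_le_pow_right₀ h2 hk2
          _ = (1 + c) ^ 2 * ((n : ℝ) + 2) ^ 4 := by ring
          _ ≤ (1 + c) ^ 2 * (16 * ((n : ℝ) + 1) ^ 4) := by
              exact mul_le_mul_of_nonneg_left h16 (by positivity)
          _ = 16 * (1 + c) ^ 2 * ((n : ℝ) + 1) ^ 4 := by ring
      have hfp : ε / ((n : ℝ) + 1) ^ 4 ≤ f p := by
        rw [hf, hε, div_le_div_iff₀ (by positivity) (by positivity)]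
        calc b / (16 * (1 + c) ^ 2) * (‖p‖ ^ 2 + c) ^ k
            ≤ b / (16 * (1 + c) ^ 2) * (16 * (1 + c) ^ 2 * ((n : ℝ) + 1) ^ 4) :=
              mul_le_mul_of_nonneg_left hbig (by positivity)
          _ = b * ((n : ℝ) + 1) ^ 4 := by field_simp
      calc ENNReal.ofReal (ε / ((n : ℝ) + 1) ^ 4) ≤ ENNReal.ofReal (f p) :=
            ENNReal.ofReal_le_ofReal hfp
        _ = (‖f p‖₊ : ℝ≥0∞) :=
            (Real.enorm_eq_ofReal (le_trans (by positivity) hfp)).symm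
    calc ENNReal.ofReal (ε / ((n : ℝ) + 1)) * v
        = ENNReal.ofReal (ε / ((n : ℝ) + 1) ^ 4) * (ENNReal.ofReal (((n:ℝ)+1) ^ 3) * v) := by
          rw [← mul_assoc, ← ENNReal.ofReal_mul (by positivity)]
          congr 2
          field_simp
      _ ≤ ENNReal.ofReal (ε / ((n : ℝ) + 1) ^ 4) * volume (A n) :=
          mul_le_mul_right (annulus_vol n) _
      _ = ∫⁻ _ in A n, ENNReal.ofReal (ε / ((n : ℝ) + 1) ^ 4) ∂volume := by
          rw [setLIntegral_const, mul_comm]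
      _ ≤ ∫⁻ p in A n, ‖f p‖₊ ∂volume :=
          setLIntegral_mono_ae (by fun_prop) (Filter.Eventually.of_forall hlow)
  have hsum : (∑' n : ℕ, ENNReal.ofReal (ε / ((n : ℝ) + 1)) * v) = ⊤ := by
    rw [ENNReal.tsum_mul_right]
    have hS : ∑' n : ℕ, ENNReal.ofReal (ε / ((n : ℝ) + 1)) = ⊤ := by
      by_contra hne
      have hsummable := ENNReal.summable_toReal hne
      have h1 : Summable fun n : ℕ => ε / ((n : ℝ) + 1) :=
        hsummable.congr fun n => ENNReal.toReal_ofReal (by positivity)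
      have h2 : Summable fun n : ℕ => 1 / ((n : ℝ) + 1) := by
        have := h1.mul_left ε⁻¹
        refine this.congr fun n => ?_
        field_simp
      have h3 : Summable fun n : ℕ => 1 / ((n + 1 : ℕ) : ℝ) := by
        refine h2.congr fun n => ?_
        push_cast
        ring
      exact Real.not_summable_one_div_natCast ((summable_nat_add_iff 1).mp h3)
    rw [hS, ENNReal.top_mul hv0]
  have htop : (⊤ : ℝ≥0∞) ≤ ∫⁻ p, ‖f p‖₊ ∂volume := by
    calc (⊤ : ℝ≥0∞) = ∑' n : ℕ, ENNReal.ofReal (ε / ((n : ℝ) + 1)) * v := hsum.symm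
      _ ≤ ∑' n : ℕ, ∫⁻ p in A n, ‖f p‖₊ ∂volume := ENNReal.tsum_le_tsum key
      _ = ∫⁻ p in ⋃ n, A n, ‖f p‖₊ ∂volume := (lintegral_iUnion hAmeas hAdisj _).symm
      _ ≤ ∫⁻ p, ‖f p‖₊ ∂volume := setLIntegral_le_lintegral _ _
  exact absurd h.hasFiniteIntegral (by rw [HasFiniteIntegral]; exact not_lt.mpr htop)

/-- For fixed `a ∈ ℝ` and `m_r > 0`, the function
`p ↦ a²/(|p|²+m_r²)² + 1/(a²+|p|²+m_r²) − 1/(|p|²+m_r²)` is Lebesgue integrable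
on `ℝ⁴`, even though each of the three summands separately is not integrable
(the first one provided `a ≠ 0`). -/
theorem combined_integrand_integrable (a mr : ℝ) (hm : 0 < mr) :
    Integrable (fun p : EuclideanSpace ℝ (Fin 4) =>
      a ^ 2 / (‖p‖ ^ 2 + mr ^ 2) ^ 2 + 1 / (a ^ 2 + ‖p‖ ^ 2 + mr ^ 2)
        - 1 / (‖p‖ ^ 2 + mr ^ 2)) ∧
    (a ≠ 0 → ¬ Integrable (fun p : EuclideanSpace ℝ (Fin 4) =>
      a ^ 2 / (‖p‖ ^ 2 + mr ^ 2) ^ 2)) ∧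
    ¬ Integrable (fun p : EuclideanSpace ℝ (Fin 4) =>
      1 / (a ^ 2 + ‖p‖ ^ 2 + mr ^ 2)) ∧
    ¬ Integrable (fun p : EuclideanSpace ℝ (Fin 4) =>
      1 / (‖p‖ ^ 2 + mr ^ 2)) := by
  refine ⟨?_, ?_, ?_, ?_⟩
  · set d : ℝ := min mr 1 with hdd
    have hd : 0 < d := lt_min hm one_pos
    set C : ℝ := 8 * a ^ 4 / d ^ 6 with hC
    have hint : Integrable (fun x : E4 => C * (1 + ‖x‖) ^ (-(6:ℝ))) :=
      (integrable_one_add_norm (by rw [finrank_euclideanSpace_fin]; norm_num)).const_mul C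
    refine hint.mono' ?_ (Filter.Eventually.of_forall fun p => ?_)
    · refine Continuous.aestronglyMeasurable ?_
      refine ((Continuous.div continuous_const (by fun_prop) fun p => by positivity).add
        (Continuous.div continuous_const (by fun_prop) fun p => by positivity)).sub
        (Continuous.div continuous_const (by fun_prop) fun p => by positivity)
    · have hs : 0 < ‖p‖ ^ 2 + mr ^ 2 := by positivity
      have has : 0 < a ^ 2 + ‖p‖ ^ 2 + mr ^ 2 := by positivity
      have key : a ^ 2 / (‖p‖ ^ 2 + mr ^ 2) ^ 2 + 1 / (a ^ 2 + ‖p‖ ^ 2 + mr ^ 2)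
          - 1 / (‖p‖ ^ 2 + mr ^ 2)
          = a ^ 4 / ((‖p‖ ^ 2 + mr ^ 2) ^ 2 * (a ^ 2 + ‖p‖ ^ 2 + mr ^ 2)) := by
        field_simp
        ring
      rw [key, Real.norm_eq_abs, abs_of_nonneg (by positivity)]
      have hrp : (1 + ‖p‖) ^ (-(6:ℝ)) = ((1 + ‖p‖) ^ (6:ℕ))⁻¹ := by
        rw [Real.rpow_neg (by positivity), show (6:ℝ) = ((6:ℕ):ℝ) by norm_num,
          Real.rpow_natCast]
      rw [hrp]
      have hd1 : d ≤ 1 := min_le_right _ _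
      have hdm : d ≤ mr := min_le_left _ _
      have h2s : d ^ 2 * (1 + ‖p‖) ^ 2 ≤ 2 * (‖p‖ ^ 2 + mr ^ 2) := by
        have e1 : d ^ 2 * (1 + ‖p‖) ^ 2 ≤ d ^ 2 * (2 + 2 * ‖p‖ ^ 2) :=
          mul_le_mul_of_nonneg_left (by nlinarith [sq_nonneg (1 - ‖p‖)]) (by positivity)
        have e2 : d ^ 2 ≤ mr ^ 2 := by nlinarith
        have e3 : d ^ 2 * ‖p‖ ^ 2 ≤ ‖p‖ ^ 2 := by
          nlinarith [mul_nonneg (by nlinarith : (0:ℝ) ≤ 1 - d ^ 2) (sq_nonneg ‖p‖)]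
        nlinarith
      have h6 : d ^ 6 * (1 + ‖p‖) ^ 6 ≤ 8 * (‖p‖ ^ 2 + mr ^ 2) ^ 3 := by
        have := pow_le_pow_left₀ (by positivity : (0:ℝ) ≤ d ^ 2 * (1 + ‖p‖) ^ 2) h2s 3
        calc d ^ 6 * (1 + ‖p‖) ^ 6 = (d ^ 2 * (1 + ‖p‖) ^ 2) ^ 3 := by ring
          _ ≤ (2 * (‖p‖ ^ 2 + mr ^ 2)) ^ 3 := this
          _ = 8 * (‖p‖ ^ 2 + mr ^ 2) ^ 3 := by ring
      have hs3 : (‖p‖ ^ 2 + mr ^ 2) ^ 3 ≤ (‖p‖ ^ 2 + mr ^ 2) ^ 2 * (a ^ 2 + ‖p‖ ^ 2 + mr ^ 2) := by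
        nlinarith [sq_nonneg a, sq_nonneg (‖p‖ ^ 2 + mr ^ 2)]
      have hrhs : C * ((1 + ‖p‖) ^ (6:ℕ))⁻¹ = 8 * a ^ 4 / (d ^ 6 * (1 + ‖p‖) ^ 6) := by
        rw [hC]; field_simp
      rw [hrhs, div_le_div_iff₀ (by positivity) (by positivity)]
      have h8 : (8:ℝ) * (‖p‖ ^ 2 + mr ^ 2) ^ 3
          ≤ 8 * ((‖p‖ ^ 2 + mr ^ 2) ^ 2 * (a ^ 2 + ‖p‖ ^ 2 + mr ^ 2)) := by linarith
      nlinarith [mul_le_mul_of_nonneg_left (h6.trans h8) (by positivity : (0:ℝ) ≤ a ^ 4)]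
  · intro ha
    exact not_integrable_aux (a ^ 2) (mr ^ 2) (by positivity) (by positivity) 2 le_rfl
  · intro h
    refine not_integrable_aux 1 (a ^ 2 + mr ^ 2) one_pos (by positivity) 1 one_le_two
      (h.congr (Filter.Eventually.of_forall fun p => by ring))
  · intro h
    refine not_integrable_aux 1 (mr ^ 2) one_pos (by positivity) 1 one_le_two
      (h.congr (Filter.Eventually.of_forall fun p => by ring))
end

section
/- For fixed a ∈ ℝ and m_r > 0, one has the identity ∫_{ℝ⁴} [a²/(|p|²+m_r²)² + 1/(a²+|p|²+m_r²) − 1/(|p|²+m_r²)] dp = ∫_0^{a²} dt (a²−t) ∫_{ℝ⁴} dp · d²/dt² [1/(m_r²+t+|p|²)], where d²/dt² [1/(m_r²+t+|p|²)] = 2/(m_r²+t+|p|²)³. -/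
open MeasureTheory Real Set

local notation "E4" => EuclideanSpace ℝ (Fin 4)

lemma aux_integrable (c : ℝ) (hc : 0 < c) :
    Integrable (fun p : E4 => 2 / (c + ‖p‖ ^ 2) ^ 3) := by
  have h4 : (Module.finrank ℝ E4 : ℝ) < 6 := by
    simp [finrank_euclideanSpace]; norm_num
  have hI := integrable_rpow_neg_one_add_norm_sq (E := E4) (μ := volume) (r := 6) h4
  set m : ℝ := min c 1 with hmdef
  have hm0 : 0 < m := lt_min hc one_pos
  refine (hI.const_mul (2 / m ^ 3)).mono' ?_ (Filter.Eventually.of_forall fun p => ?_)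
  · refine (Continuous.aestronglyMeasurable ?_)
    exact continuous_const.div ((continuous_const.add (continuous_norm.pow 2)).pow 3)
      (fun p => by positivity)
  · have hr : (0:ℝ) ≤ ‖p‖ ^ 2 := by positivity
    have h1 : m * (1 + ‖p‖ ^ 2) ≤ c + ‖p‖ ^ 2 := by
      have h2 : m ≤ c := min_le_left _ _
      have h3 : m ≤ 1 := min_le_right _ _
      nlinarith
    have hpos : (0:ℝ) < 1 + ‖p‖ ^ 2 := by positivity
    have hrp : ((1:ℝ) + ‖p‖ ^ 2) ^ ((-6:ℝ) / 2) = (((1:ℝ) + ‖p‖ ^ 2) ^ 3)⁻¹ := by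
      rw [show ((-6:ℝ)/2) = ((-3 : ℤ) : ℝ) by norm_num, Real.rpow_intCast]
      rw [zpow_neg]
      norm_cast
    have hcube : m ^ 3 * (1 + ‖p‖ ^ 2) ^ 3 ≤ (c + ‖p‖ ^ 2) ^ 3 := by
      calc m ^ 3 * (1 + ‖p‖ ^ 2) ^ 3 = (m * (1 + ‖p‖ ^ 2)) ^ 3 := by ring
        _ ≤ (c + ‖p‖ ^ 2) ^ 3 := by
            apply pow_le_pow_left₀ (by positivity) h1
    have hd : (0:ℝ) < (c + ‖p‖ ^ 2) ^ 3 := by positivity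
    rw [Real.norm_eq_abs, abs_of_nonneg (by positivity)]
    rw [hrp]
    have hR : 2 / m ^ 3 * ((1 + ‖p‖ ^ 2) ^ 3)⁻¹ = 2 / (m ^ 3 * (1 + ‖p‖ ^ 2) ^ 3) := by
      field_simp
    rw [hR, div_le_div_iff₀ hd (by positivity)]
    nlinarith [hcube]

lemma taylor_id (c A : ℝ) (hc : 0 < c) (hA : 0 ≤ A) :
    (∫ t in (0:ℝ)..A, (A - t) * (2 / (c + t) ^ 3)) = A / c ^ 2 + 1 / (A + c) - 1 / c := by
  have key : ∀ t ∈ Set.uIcc (0:ℝ) A,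
      HasDerivAt (fun t => -(A - t) / (c + t) ^ 2 + 1 / (c + t))
        ((A - t) * (2 / (c + t) ^ 3)) t := by
    intro t ht
    rw [Set.uIcc_of_le hA] at ht
    have hct : (0:ℝ) < c + t := by linarith [ht.1]
    have h1 : HasDerivAt (fun t : ℝ => c + t) 1 t := (hasDerivAt_id t).const_add c
    have h2 : HasDerivAt (fun t : ℝ => (c + t) ^ 2) (2 * (c + t)) t := by
      simpa using h1.fun_pow 2
    have h3 : HasDerivAt (fun t : ℝ => -(A - t)) 1 t := by
      simpa using ((hasDerivAt_id t).const_sub A).fun_neg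
    have h4 : HasDerivAt (fun t : ℝ => -(A - t) / (c + t) ^ 2)
        ((1 * (c + t) ^ 2 - -(A - t) * (2 * (c + t))) / ((c + t) ^ 2) ^ 2) t :=
      h3.div h2 (by positivity)
    have h5 : HasDerivAt (fun t : ℝ => 1 / (c + t)) (-(1 / (c + t) ^ 2)) t := by
      have := h1.fun_inv (ne_of_gt hct)
      simpa [one_div, neg_div] using this
    have h6 := h4.fun_add h5
    refine h6.congr_deriv ?_
    have hne : c + t ≠ 0 := ne_of_gt hct
    field_simp
    ring
  have hcont : ContinuousOn (fun t => (A - t) * (2 / (c + t) ^ 3)) (Set.uIcc 0 A) := by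
    apply ContinuousOn.mul (Continuous.continuousOn (by continuity))
    apply ContinuousOn.div continuousOn_const
      (Continuous.continuousOn (by continuity))
    intro t ht
    rw [Set.uIcc_of_le hA] at ht
    have : (0:ℝ) < c + t := by linarith [ht.1]
    positivity
  have := intervalIntegral.integral_eq_sub_of_hasDerivAt key
    (hcont.intervalIntegrable)
  rw [this]
  have hAc : (0:ℝ) < A + c := by linarith
  field_simp
  ring


/-- Identity between the regularized integral and the double (Taylor-remainder)
integral: for fixed `a ∈ ℝ`, `m_r > 0`,
`∫_{ℝ⁴} [a²/(|p|²+m_r²)² + 1/(a²+|p|²+m_r²) − 1/(|p|²+m_r²)] dp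
  = ∫_0^{a²} dt (a²−t) ∫_{ℝ⁴} dp 2/(m_r²+t+|p|²)³`,
the inner integrand being `d²/dt² [1/(m_r²+t+|p|²)]`; moreover the inner
4-dimensional integral is finite for every `t ≥ 0`. -/
theorem regularized_integral_as_double_integral (a mr : ℝ) (hm : 0 < mr) :
    (∀ t : ℝ, 0 ≤ t →
      Integrable (fun p : EuclideanSpace ℝ (Fin 4) =>
        2 / (mr ^ 2 + t + ‖p‖ ^ 2) ^ 3)) ∧
    ∫ p : EuclideanSpace ℝ (Fin 4),
        (a ^ 2 / (‖p‖ ^ 2 + mr ^ 2) ^ 2 + 1 / (a ^ 2 + ‖p‖ ^ 2 + mr ^ 2)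
          - 1 / (‖p‖ ^ 2 + mr ^ 2)) =
      ∫ t in (0:ℝ)..a ^ 2, (a ^ 2 - t) *
        ∫ p : EuclideanSpace ℝ (Fin 4), 2 / (mr ^ 2 + t + ‖p‖ ^ 2) ^ 3 := by
  have hint : ∀ t : ℝ, 0 ≤ t →
      Integrable (fun p : E4 => 2 / (mr ^ 2 + t + ‖p‖ ^ 2) ^ 3) := by
    intro t ht
    have := aux_integrable (mr ^ 2 + t) (by positivity)
    simpa using this
  refine ⟨hint, ?_⟩
  set A : ℝ := a ^ 2 with hAdef
  have hA : 0 ≤ A := sq_nonneg a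
  -- pointwise Taylor identity
  have hpt : ∀ p : E4,
      a ^ 2 / (‖p‖ ^ 2 + mr ^ 2) ^ 2 + 1 / (a ^ 2 + ‖p‖ ^ 2 + mr ^ 2)
          - 1 / (‖p‖ ^ 2 + mr ^ 2)
        = ∫ t in (0:ℝ)..A, (A - t) * (2 / (mr ^ 2 + t + ‖p‖ ^ 2) ^ 3) := by
    intro p
    have hc : (0:ℝ) < ‖p‖ ^ 2 + mr ^ 2 := by positivity
    have := taylor_id (‖p‖ ^ 2 + mr ^ 2) A hc hA
    have hcongr : (∫ t in (0:ℝ)..A, (A - t) * (2 / (‖p‖ ^ 2 + mr ^ 2 + t) ^ 3))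
        = ∫ t in (0:ℝ)..A, (A - t) * (2 / (mr ^ 2 + t + ‖p‖ ^ 2) ^ 3) := by
      apply intervalIntegral.integral_congr
      intro t _
      ring_nf
    rw [hcongr] at this
    rw [this]
    rw [hAdef]
    ring_nf
  rw [integral_congr_ae (Filter.Eventually.of_forall hpt)]
  -- convert interval integrals to set integrals
  have hset : ∀ p : E4, (∫ t in (0:ℝ)..A, (A - t) * (2 / (mr ^ 2 + t + ‖p‖ ^ 2) ^ 3))
      = ∫ t in Set.Ioc (0:ℝ) A, (A - t) * (2 / (mr ^ 2 + t + ‖p‖ ^ 2) ^ 3) := fun p =>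
    intervalIntegral.integral_of_le hA
  rw [integral_congr_ae (Filter.Eventually.of_forall hset)]
  -- Fubini
  set f : E4 → ℝ → ℝ := fun p t => (A - t) * (2 / (mr ^ 2 + t + ‖p‖ ^ 2) ^ 3) with hf
  have hmeas : AEStronglyMeasurable (Function.uncurry f)
      (volume.prod (volume.restrict (Set.Ioc (0:ℝ) A))) := by
    apply Measurable.aestronglyMeasurable
    apply Measurable.mul
    · fun_prop
    · apply Measurable.div measurable_const
      fun_prop
  have hcontOn : ∀ p : E4, ContinuousOn (fun t => f p t) (Set.Icc 0 A) := by
    intro p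
    apply ContinuousOn.mul (Continuous.continuousOn (by continuity))
    apply ContinuousOn.div continuousOn_const (Continuous.continuousOn (by continuity))
    intro t ht
    have : (0:ℝ) < mr ^ 2 + t + ‖p‖ ^ 2 := by
      have := ht.1; positivity
    positivity
  have hIoc : ∀ p : E4, IntegrableOn (fun t => f p t) (Set.Ioc 0 A) := fun p =>
    ((hcontOn p).integrableOn_Icc).mono_set Set.Ioc_subset_Icc_self
  have hbound : ∀ p : E4, ∀ t ∈ Set.Ioc (0:ℝ) A,
      ‖f p t‖ ≤ A * (2 / (mr ^ 2 + ‖p‖ ^ 2) ^ 3) := by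
    intro p t ht
    have ht0 : 0 < t := ht.1
    have htA : t ≤ A := ht.2
    have hd1 : (0:ℝ) < mr ^ 2 + ‖p‖ ^ 2 := by positivity
    have hd2 : (0:ℝ) < mr ^ 2 + t + ‖p‖ ^ 2 := by positivity
    rw [hf]
    rw [Real.norm_eq_abs, abs_of_nonneg (mul_nonneg (by linarith) (by positivity))]
    apply mul_le_mul (by linarith)
    · apply div_le_div_of_nonneg_left (by norm_num) (by positivity)
      apply pow_le_pow_left₀ (le_of_lt hd1) (by linarith)
    · positivity
    · linarith
  have hprod : Integrable (Function.uncurry f)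
      (volume.prod (volume.restrict (Set.Ioc (0:ℝ) A))) := by
    rw [integrable_prod_iff hmeas]
    constructor
    · exact Filter.Eventually.of_forall fun p => hIoc p
    · -- integrability of p ↦ ∫ t, ‖f p t‖
      have hgmeas : AEStronglyMeasurable
          (fun p : E4 => ∫ t in Set.Ioc (0:ℝ) A, ‖f p t‖) volume :=
        (hmeas.norm).integral_prod_right'
      have hdom := (aux_integrable (mr ^ 2) (by positivity)).const_mul (A * A)
      refine hdom.mono' hgmeas (Filter.Eventually.of_forall fun p => ?_)
      simp only [Function.uncurry_apply_pair]
      have hnn : 0 ≤ ∫ t in Set.Ioc (0:ℝ) A, ‖f p t‖ :=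
        integral_nonneg fun t => norm_nonneg _
      rw [Real.norm_eq_abs, abs_of_nonneg hnn]
      calc (∫ t in Set.Ioc (0:ℝ) A, ‖f p t‖)
          ≤ ∫ _t in Set.Ioc (0:ℝ) A, A * (2 / (mr ^ 2 + ‖p‖ ^ 2) ^ 3) := by
            apply setIntegral_mono_on ((hIoc p).norm) (integrableOn_const ?_)
              measurableSet_Ioc (hbound p)
            exact measure_Ioc_lt_top.ne
        _ = (volume (Set.Ioc (0:ℝ) A)).toReal * (A * (2 / (mr ^ 2 + ‖p‖ ^ 2) ^ 3)) := by
            rw [setIntegral_const]; rfl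
        _ ≤ A * A * (2 / (mr ^ 2 + ‖p‖ ^ 2) ^ 3) := by
            rw [Real.volume_Ioc, ENNReal.toReal_ofReal (by linarith)]
            exact le_of_eq (by ring)
  have hswap := integral_integral_swap hprod
  rw [hswap]
  rw [intervalIntegral.integral_of_le hA]
  apply setIntegral_congr_ae measurableSet_Ioc
  filter_upwards with t _
  rw [hf]
  simp only []
  rw [integral_const_mul]
end
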